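/- arXiv:1805.10229 — 2 statements merged into one kernel-verified Lean document; each statement's English description precedes it below -/
import Mathlib

section
/- Let $T > 0$, $D > 0$, $\gamma \in \mathbb{R}$, and let $c : [0,T] \to \mathbb{R}$ be continuous with $c(t) \ge 1$ for all $t \in [0,T]$. Set $E(t) = \exp\big(\int_0^t c(s)\,ds\big)$ and define $\check U(t,\eta) = \dfrac{(\gamma E(T) - \eta E(t))^2}{-2D E(t)^2 + (1+2D) E(T)^2}$ on $[0,T] \times \mathbb{R}$. Then: (i) the denominator satisfies $-2D E(t)^2 + (1+2D) E(T)^2 \ge E(T)^2 > 0$ for all $t \in [0,T]$; (ii) $\check U(T,\eta) = (\eta - \gamma)^2$ for all $\eta$; and (iii) for all $(t,\eta) \in (0,T) \times \mathbb{R}$: $\partial_t \check U(t,\eta) - c(t)\, \eta\, \partial_\eta \check U(t,\eta) - D\, (\partial_\eta \check U(t,\eta))^2 \ge 0$. -/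
open Set

/-- The explicit function
`Ǔ(t,η) = (γE(T) - ηE(t))² / (-2DE(t)² + (1+2D)E(T)²)`, with
`E(t) = exp(∫₀ᵗ c)` and `c ≥ 1` continuous, is a classical subsolution of the
moderate-deviations HJB equation `∂ₜG - c(t)η∂_ηG - D(∂_ηG)² = 0` with terminal condition
`(η - γ)²`. -/
theorem stmt_10
    (T D γ : ℝ) (hT : 0 < T) (hD : 0 < D)
    (c : ℝ → ℝ) (hc_cont : ContinuousOn c (Icc 0 T))
    (hc : ∀ t ∈ Icc (0:ℝ) T, 1 ≤ c t)
    (E : ℝ → ℝ) (hE : ∀ t, E t = Real.exp (∫ s in (0:ℝ)..t, c s))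
    (U : ℝ → ℝ → ℝ)
    (hU : ∀ t η, U t η =
      (γ * E T - η * E t)^2 / (-2*D*(E t)^2 + (1 + 2*D)*(E T)^2)) :
    -- (i) positivity of the denominator
    (∀ t ∈ Icc (0:ℝ) T,
      -2*D*(E t)^2 + (1 + 2*D)*(E T)^2 ≥ (E T)^2 ∧ 0 < (E T)^2)
    -- (ii) terminal condition
    ∧ (∀ η : ℝ, U T η = (η - γ)^2)
    -- (iii) the HJB (subsolution) inequality on (0,T) × ℝ
    ∧ (∀ t ∈ Ioo (0:ℝ) T, ∀ η : ℝ,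
        deriv (fun t' => U t' η) t - c t * η * deriv (fun η' => U t η') η
          - D * (deriv (fun η' => U t η') η)^2 ≥ 0) := by
  have hEpos : ∀ t, 0 < E t := fun t => (hE t) ▸ Real.exp_pos _
  have hmono : ∀ t ∈ Icc (0:ℝ) T, E t ≤ E T := by
    intro t ht
    rw [hE, hE]
    apply Real.exp_le_exp.2
    have hi1 : IntervalIntegrable c MeasureTheory.volume 0 t :=
      (hc_cont.mono (by rw [uIcc_of_le ht.1]; exact Icc_subset_Icc le_rfl ht.2)).intervalIntegrable
    have hi2 : IntervalIntegrable c MeasureTheory.volume t T :=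
      (hc_cont.mono (by rw [uIcc_of_le ht.2]; exact Icc_subset_Icc ht.1 le_rfl)).intervalIntegrable
    have hadd := intervalIntegral.integral_add_adjacent_intervals hi1 hi2
    have hnn : (0:ℝ) ≤ ∫ s in t..T, c s := by
      apply intervalIntegral.integral_nonneg ht.2
      intro u hu
      have := hc u ⟨le_trans ht.1 hu.1, hu.2⟩
      linarith
    linarith
  have hden : ∀ t ∈ Icc (0:ℝ) T, (E T)^2 ≤ -2*D*(E t)^2 + (1 + 2*D)*(E T)^2 := by
    intro t ht
    have h1 := hmono t ht
    have h2 := (hEpos t).le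
    have h3 : (E t)^2 ≤ (E T)^2 := pow_le_pow_left₀ h2 h1 2
    nlinarith
  refine ⟨fun t ht => ⟨hden t ht, pow_pos (hEpos T) 2⟩, ?_, ?_⟩
  · intro η
    rw [hU]
    have : -2*D*(E T)^2 + (1 + 2*D)*(E T)^2 = (E T)^2 := by ring
    rw [this]
    rw [div_eq_iff (pow_pos (hEpos T) 2).ne']
    ring
  · intro t ht η
    have htI : t ∈ Icc (0:ℝ) T := ⟨ht.1.le, ht.2.le⟩
    -- derivative of E at t
    have hcontAt : ContinuousAt c t :=
      (hc_cont t htI).continuousAt (Icc_mem_nhds ht.1 ht.2)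
    have hi1 : IntervalIntegrable c MeasureTheory.volume 0 t :=
      (hc_cont.mono (by rw [uIcc_of_le htI.1]; exact Icc_subset_Icc le_rfl htI.2)).intervalIntegrable
    have hmeas : StronglyMeasurableAtFilter c (nhds t) MeasureTheory.volume :=
      ContinuousOn.stronglyMeasurableAtFilter isOpen_Ioo
        (hc_cont.mono Ioo_subset_Icc_self) t ht
    have hI : HasDerivAt (fun u => ∫ s in (0:ℝ)..u, c s) (c t) t :=
      intervalIntegral.integral_hasDerivAt_right hi1 hmeas hcontAt
    have hEfun : E = fun u => Real.exp (∫ s in (0:ℝ)..u, c s) := funext hE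
    have hEder : HasDerivAt E (E t * c t) t := by
      have h := hI.exp
      rw [← hE t] at h
      exact h.congr_of_eventuallyEq (Filter.Eventually.of_forall fun u => hE u)
    set q : ℝ := -2*D*(E t)^2 + (1 + 2*D)*(E T)^2 with hq
    have hqpos : 0 < q := lt_of_lt_of_le (pow_pos (hEpos T) 2) (hden t htI)
    -- t-derivative
    have hN : HasDerivAt (fun t' => (γ * E T - η * E t')^2)
        (2 * (γ * E T - η * E t) ^ 1 * (0 - η * (E t * c t))) t := by
      have h1 : HasDerivAt (fun t' => γ * E T - η * E t') (0 - η * (E t * c t)) t :=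
        (hasDerivAt_const t (γ * E T)).sub (hEder.const_mul η)
      simpa using h1.fun_pow 2
    have hQ : HasDerivAt (fun t' => -2*D*(E t')^2 + (1 + 2*D)*(E T)^2)
        (-2*D*(2 * E t ^ 1 * (E t * c t)) + 0) t := by
      have h2 : HasDerivAt (fun t' => (E t')^2) (2 * E t ^ 1 * (E t * c t)) t := by
        simpa using hEder.fun_pow 2
      exact ((h2.const_mul (-2*D)).add (hasDerivAt_const t _))
    have hUt : HasDerivAt (fun t' => U t' η)
        ((2 * (γ * E T - η * E t) ^ 1 * (0 - η * (E t * c t)) * q -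
          (γ * E T - η * E t)^2 * (-2*D*(2 * E t ^ 1 * (E t * c t)) + 0)) / q^2) t := by
      have heq : (fun t' => U t' η)
          = fun t' => (γ * E T - η * E t')^2 / (-2*D*(E t')^2 + (1 + 2*D)*(E T)^2) :=
        funext fun t' => hU t' η
      rw [heq]
      exact hN.div hQ (ne_of_gt hqpos)
    -- η-derivative
    have hUη : HasDerivAt (fun η' => U t η')
        ((2 * (γ * E T - η * E t) ^ 1 * (0 - 1 * E t)) / q) η := by
      have h3 : HasDerivAt (fun η' => γ * E T - η' * E t) (0 - 1 * E t) η :=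
        (hasDerivAt_const η (γ * E T)).sub ((hasDerivAt_id η).mul_const (E t))
      have heq2 : (fun η' => U t η')
          = fun η' => (γ * E T - η' * E t)^2 / (-2*D*(E t)^2 + (1 + 2*D)*(E T)^2) :=
        funext fun η' => hU t η'
      rw [heq2]
      have h4 := (h3.fun_pow 2).div_const (-2*D*(E t)^2 + (1 + 2*D)*(E T)^2)
      exact h4.congr_deriv (by norm_num [hq])
    rw [hUt.deriv, hUη.deriv]
    have hct : 1 ≤ c t := hc t htI
    have key : (2 * (γ * E T - η * E t) ^ 1 * (0 - η * (E t * c t)) * q -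
          (γ * E T - η * E t)^2 * (-2*D*(2 * E t ^ 1 * (E t * c t)) + 0)) / q^2
        - c t * η * ((2 * (γ * E T - η * E t) ^ 1 * (0 - 1 * E t)) / q)
        - D * ((2 * (γ * E T - η * E t) ^ 1 * (0 - 1 * E t)) / q)^2
        = 4 * D * (E t)^2 * (γ * E T - η * E t)^2 * (c t - 1) / q^2 := by
      field_simp
      ring
    rw [key]
    apply div_nonneg _ (sq_nonneg q)
    exact mul_nonneg (mul_nonneg (by positivity : (0:ℝ) ≤ 4*D*(E t)^2) (sq_nonneg _))
      (by linarith : (0:ℝ) ≤ c t - 1)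
end

section
/- Let $T > 0$, $\kappa > 0$, $D > 0$, and $\gamma \in \mathbb{R}$. Define $G(t,x) = \dfrac{(\gamma e^{\kappa T} - x e^{\kappa t})^2}{-2D e^{2\kappa t} + (1+2D) e^{2\kappa T}}$ on $[0,T] \times \mathbb{R}$. Then the denominator satisfies $-2D e^{2\kappa t} + (1+2D) e^{2\kappa T} \ge e^{2\kappa T} > 0$ for all $t \in [0,T]$, $G(T,x) = (x - \gamma)^2$ for all $x$, and $G$ satisfies exactly $\partial_t G(t,x) - \kappa x\, \partial_x G(t,x) - \kappa D\, (\partial_x G(t,x))^2 = 0$ for all $(t,x) \in (0,T) \times \mathbb{R}$. -/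
open Set

/-- The explicit function
`G(t,x) = (γe^{κT} - xe^{κt})² / (-2De^{2κt} + (1+2D)e^{2κT})` is an exact solution of the
homogenized HJB equation `∂ₜG - κx∂ₓG - κD(∂ₓG)² = 0` with terminal condition
`G(T,x) = (x - γ)²`. -/
theorem stmt_12
    (T κ D γ : ℝ) (hT : 0 < T) (hκ : 0 < κ) (hD : 0 < D)
    (G : ℝ → ℝ → ℝ)
    (hG : ∀ t x, G t x =
      (γ * Real.exp (κ*T) - x * Real.exp (κ*t))^2
        / (-2*D * Real.exp (2*κ*t) + (1 + 2*D) * Real.exp (2*κ*T))) :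
    -- positivity of the denominator
    (∀ t ∈ Icc (0:ℝ) T,
      -2*D * Real.exp (2*κ*t) + (1 + 2*D) * Real.exp (2*κ*T) ≥ Real.exp (2*κ*T)
        ∧ 0 < Real.exp (2*κ*T))
    -- terminal condition
    ∧ (∀ x : ℝ, G T x = (x - γ)^2)
    -- the HJB equation holds exactly on (0,T) × ℝ
    ∧ (∀ t ∈ Ioo (0:ℝ) T, ∀ x : ℝ,
        deriv (fun t' => G t' x) t - κ * x * deriv (fun x' => G t x') x
          - κ * D * (deriv (fun x' => G t x') x)^2 = 0) := by
  have hden : ∀ t, t ≤ T →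
      Real.exp (2*κ*T) ≤ -2*D * Real.exp (2*κ*t) + (1 + 2*D) * Real.exp (2*κ*T) := by
    intro t ht
    have h1 : Real.exp (2*κ*t) ≤ Real.exp (2*κ*T) := Real.exp_le_exp.mpr (by nlinarith)
    nlinarith [Real.exp_pos (2*κ*t)]
  refine ⟨fun t ht => ⟨hden t ht.2, Real.exp_pos _⟩, ?_, ?_⟩
  · intro x
    rw [hG]
    have h2 : Real.exp (2*κ*T) = Real.exp (κ*T) * Real.exp (κ*T) := by
      rw [← Real.exp_add]; ring_nf
    have ha : Real.exp (κ*T) ≠ 0 := (Real.exp_pos _).ne'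
    rw [h2]
    have h3 : -2*D * (Real.exp (κ*T) * Real.exp (κ*T))
        + (1 + 2*D) * (Real.exp (κ*T) * Real.exp (κ*T))
        = Real.exp (κ*T) * Real.exp (κ*T) := by ring
    rw [h3, div_eq_iff (mul_ne_zero ha ha)]
    ring
  · intro t ht x
    have hd0 : -2*D * Real.exp (2*κ*t) + (1 + 2*D) * Real.exp (2*κ*T) ≠ 0 := by
      have := hden t ht.2.le
      have := Real.exp_pos (2*κ*T)
      linarith
    -- derivatives of exponentials
    have hu : HasDerivAt (fun t' : ℝ => Real.exp (κ*t')) (κ * Real.exp (κ*t)) t := by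
      have := ((hasDerivAt_id t).const_mul κ).exp
      simpa [mul_comm] using this
    have hu2 : HasDerivAt (fun t' : ℝ => Real.exp (2*κ*t')) (2*κ * Real.exp (2*κ*t)) t := by
      have := ((hasDerivAt_id t).const_mul (2*κ)).exp
      simpa [mul_comm] using this
    -- t-derivative
    have hN : HasDerivAt (fun t' => (γ * Real.exp (κ*T) - x * Real.exp (κ*t'))^2)
        (2 * (γ * Real.exp (κ*T) - x * Real.exp (κ*t)) * (-(x * (κ * Real.exp (κ*t))))) t := by
      have := ((hasDerivAt_const t (γ * Real.exp (κ*T))).sub (hu.const_mul x)).pow 2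
      refine this.congr_deriv ?_
      norm_num
    have hDen : HasDerivAt (fun t' => -2*D * Real.exp (2*κ*t') + (1 + 2*D) * Real.exp (2*κ*T))
        (-2*D * (2*κ * Real.exp (2*κ*t))) t :=
      (hu2.const_mul (-2*D)).add_const _
    have hGt : HasDerivAt (fun t' => G t' x)
        ((2 * (γ * Real.exp (κ*T) - x * Real.exp (κ*t)) * (-(x * (κ * Real.exp (κ*t)))) *
            (-2*D * Real.exp (2*κ*t) + (1 + 2*D) * Real.exp (2*κ*T))
          - (γ * Real.exp (κ*T) - x * Real.exp (κ*t))^2 * (-2*D * (2*κ * Real.exp (2*κ*t))))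
         / (-2*D * Real.exp (2*κ*t) + (1 + 2*D) * Real.exp (2*κ*T))^2) t := by
      have := hN.div hDen hd0
      have heq : (fun t' => G t' x) = fun t' =>
          (γ * Real.exp (κ*T) - x * Real.exp (κ*t'))^2
            / (-2*D * Real.exp (2*κ*t') + (1 + 2*D) * Real.exp (2*κ*T)) :=
        funext fun t' => hG t' x
      rw [heq]
      exact this
    -- x-derivative
    have hGx : HasDerivAt (fun x' => G t x')
        (2 * (γ * Real.exp (κ*T) - x * Real.exp (κ*t)) * (-Real.exp (κ*t))
          / (-2*D * Real.exp (2*κ*t) + (1 + 2*D) * Real.exp (2*κ*T))) x := by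
      have hN' : HasDerivAt (fun x' => (γ * Real.exp (κ*T) - x' * Real.exp (κ*t))^2)
          (2 * (γ * Real.exp (κ*T) - x * Real.exp (κ*t)) * (-Real.exp (κ*t))) x := by
        have := ((hasDerivAt_const x (γ * Real.exp (κ*T))).sub
          ((hasDerivAt_id x).mul_const (Real.exp (κ*t)))).pow 2
        refine this.congr_deriv ?_
        norm_num
      have heq : (fun x' => G t x') = fun x' =>
          (γ * Real.exp (κ*T) - x' * Real.exp (κ*t))^2
            / (-2*D * Real.exp (2*κ*t) + (1 + 2*D) * Real.exp (2*κ*T)) :=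
        funext fun x' => hG t x'
      rw [heq]
      exact hN'.div_const _
    have e1 : Real.exp (2*κ*t) = Real.exp (κ*t)^2 := by
      rw [sq, ← Real.exp_add]; ring_nf
    have e2 : Real.exp (2*κ*T) = Real.exp (κ*T)^2 := by
      rw [sq, ← Real.exp_add]; ring_nf
    rw [hGt.deriv, hGx.deriv, e1, e2]
    set u := Real.exp (κ*t) with hu'
    set v := Real.exp (κ*T) with hv'
    have hd0' : -2*D * u^2 + (1 + 2*D) * v^2 ≠ 0 := by
      rw [hu', hv', ← e1, ← e2]; exact hd0
    rw [div_pow, mul_div_assoc', mul_div_assoc',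
      div_sub_div _ _ (pow_ne_zero 2 hd0') hd0',
      div_sub_div _ _ (mul_ne_zero (pow_ne_zero 2 hd0') hd0') (pow_ne_zero 2 hd0'),
      div_eq_zero_iff]
    left
    ring
end
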